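/- Let X and Y be Banach spaces, x ∈ X \ {0}, y ∈ Y \ {0}. Then (x, y) is not a semi denting point of B_{X ⊕_1 Y}. -/

import Mathlib

/-- A point `x₀` of the closed unit ball of `Z` is a *semi denting point* of `B_Z` if for every
`ε > 0` there is a slice `S(B_Z, f, δ) = {z ∈ B_Z : f z > ‖f‖ - δ}` contained in `B(x₀, ε)`. -/
def IsSemiDentingPointOfBall {Z : Type*} [NormedAddCommGroup Z] [NormedSpace ℝ Z] (x : Z) :
    Prop :=
  ‖x‖ ≤ 1 ∧ ∀ ε > (0 : ℝ), ∃ (f : Z →L[ℝ] ℝ) (δ : ℝ), 0 < δ ∧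
    {z : Z | ‖z‖ ≤ 1 ∧ f z > ‖f‖ - δ} ⊆ Metric.closedBall x ε

set_option linter.unusedSectionVars false

section Aux

variable {X Y : Type*} [NormedAddCommGroup X] [NormedSpace ℝ X]
  [NormedAddCommGroup Y] [NormedSpace ℝ Y]

lemma norm_withLp_one (z : WithLp 1 (X × Y)) : ‖z‖ = ‖z.fst‖ + ‖z.snd‖ := by
  have h : (0:ℝ) < (1 : ENNReal).toReal := by simp
  simpa using WithLp.prod_norm_eq_add h z

lemma decomp_withLp_one (z : WithLp 1 (X × Y)) :
    z = (WithLp.equiv 1 (X × Y)).symm (z.fst, 0) +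
        (WithLp.equiv 1 (X × Y)).symm (0, z.snd) := by
  apply (WithLp.equiv 1 (X × Y)).injective
  ext <;> simp

/-- For a functional on a ball, find a point of the ball where it nearly attains its norm. -/
lemma exists_pos_apply {E : Type*} [NormedAddCommGroup E] [NormedSpace ℝ E]
    (g : E →L[ℝ] ℝ) {r : ℝ} (hr : r < ‖g‖) : ∃ a : E, ‖a‖ ≤ 1 ∧ r < g a := by
  by_cases hr0 : r < 0
  · exact ⟨0, by simp, by simpa using hr0⟩
  · obtain ⟨a, ha1, ha2⟩ := g.exists_lt_apply_of_lt_opNorm hr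
    rcases le_or_gt 0 (g a) with h | h
    · exact ⟨a, ha1.le, by rwa [Real.norm_eq_abs, abs_of_nonneg h] at ha2⟩
    · refine ⟨-a, by simpa using ha1.le, ?_⟩
      rw [map_neg]
      rwa [Real.norm_eq_abs, abs_of_neg h] at ha2

end Aux

/-- For Banach spaces `X`, `Y` and `x ≠ 0`, `y ≠ 0`, the point `(x, y)` is not a semi denting
point of `B_{X ⊕_1 Y}`. -/
theorem not_isSemiDentingPointOfBall_prod_one
    {X Y : Type*} [NormedAddCommGroup X] [NormedSpace ℝ X] [CompleteSpace X]
    [NormedAddCommGroup Y] [NormedSpace ℝ Y] [CompleteSpace Y]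
    (x : X) (y : Y) (hx : x ≠ 0) (hy : y ≠ 0) :
    ¬ IsSemiDentingPointOfBall ((WithLp.equiv 1 (X × Y)).symm (x, y)) := by
  rintro ⟨-, h⟩
  set ε : ℝ := min ‖x‖ ‖y‖ / 2 with hε
  have hεpos : 0 < ε := by
    have := norm_pos_iff.mpr hx
    have := norm_pos_iff.mpr hy
    positivity
  obtain ⟨f, δ, hδ, hsub⟩ := h ε hεpos
  -- component functionals
  set e := (WithLp.prodContinuousLinearEquiv 1 ℝ X Y).symm.toContinuousLinearMap
  set g₁ : X →L[ℝ] ℝ := f.comp (e.comp (ContinuousLinearMap.inl ℝ X Y)) with hg₁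
  set g₂ : Y →L[ℝ] ℝ := f.comp (e.comp (ContinuousLinearMap.inr ℝ X Y)) with hg₂
  have hg₁app : ∀ a : X, g₁ a = f ((WithLp.equiv 1 (X × Y)).symm (a, 0)) := fun a => rfl
  have hg₂app : ∀ b : Y, g₂ b = f ((WithLp.equiv 1 (X × Y)).symm (0, b)) := fun b => rfl
  have hsplit : ∀ z : WithLp 1 (X × Y), f z = g₁ z.fst + g₂ z.snd := by
    intro z
    rw [hg₁app, hg₂app, ← map_add]
    exact congrArg f (decomp_withLp_one z)
  have hmax : ‖f‖ ≤ max ‖g₁‖ ‖g₂‖ := by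
    refine f.opNorm_le_bound (by positivity) fun z => ?_
    rw [hsplit z, norm_withLp_one]
    calc ‖g₁ z.fst + g₂ z.snd‖ ≤ ‖g₁ z.fst‖ + ‖g₂ z.snd‖ := norm_add_le _ _
      _ ≤ ‖g₁‖ * ‖z.fst‖ + ‖g₂‖ * ‖z.snd‖ :=
          add_le_add (g₁.le_opNorm _) (g₂.le_opNorm _)
      _ ≤ max ‖g₁‖ ‖g₂‖ * ‖z.fst‖ + max ‖g₁‖ ‖g₂‖ * ‖z.snd‖ := by
          gcongr <;> simp [le_max_left, le_max_right]
      _ = max ‖g₁‖ ‖g₂‖ * (‖z.fst‖ + ‖z.snd‖) := by ring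
  -- find a point of the slice of the form (a,0) or (0,b)
  have key : (∃ a : X, ‖a‖ ≤ 1 ∧ ‖f‖ - δ < g₁ a) ∨ (∃ b : Y, ‖b‖ ≤ 1 ∧ ‖f‖ - δ < g₂ b) := by
    by_cases h0 : ‖f‖ - δ < 0
    · exact Or.inl ⟨0, by simp, by simpa using h0⟩
    rcases le_total ‖g₂‖ ‖g₁‖ with hle | hle
    · left
      refine exists_pos_apply g₁ ?_
      have : ‖f‖ ≤ ‖g₁‖ := le_trans hmax (by simp [hle])
      linarith
    · right
      refine exists_pos_apply g₂ ?_
      have : ‖f‖ ≤ ‖g₂‖ := le_trans hmax (by simp [hle])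
      linarith
  rcases key with ⟨a, ha1, ha2⟩ | ⟨b, hb1, hb2⟩
  · have hz : ((WithLp.equiv 1 (X × Y)).symm (a, 0)) ∈
        {z : WithLp 1 (X × Y) | ‖z‖ ≤ 1 ∧ f z > ‖f‖ - δ} := by
      constructor
      · rw [norm_withLp_one]; simpa using ha1
      · rw [← hg₁app]; exact ha2
    have := hsub hz
    rw [Metric.mem_closedBall, dist_eq_norm] at this
    change ‖(WithLp.equiv 1 (X × Y)).symm ((a, 0) - (x, y))‖ ≤ ε at this
    have hnorm : ‖(WithLp.equiv 1 (X × Y)).symm ((a, 0) - (x, y))‖ = ‖a - x‖ + ‖y‖ := by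
      rw [show ((a,0) - (x,y) : X × Y) = (a - x, -y) by ext <;> simp]
      rw [norm_withLp_one]; simp
    rw [hnorm] at this
    have hyε : ε < ‖y‖ := by
      have : min ‖x‖ ‖y‖ ≤ ‖y‖ := min_le_right _ _
      have := norm_pos_iff.mpr hy
      rw [hε]; linarith [min_le_right ‖x‖ ‖y‖, norm_pos_iff.mpr hy]
    have : ‖y‖ ≤ ε := le_trans (le_add_of_nonneg_left (norm_nonneg _)) this
    linarith
  · have hz : ((WithLp.equiv 1 (X × Y)).symm (0, b)) ∈
        {z : WithLp 1 (X × Y) | ‖z‖ ≤ 1 ∧ f z > ‖f‖ - δ} := by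
      constructor
      · rw [norm_withLp_one]; simpa using hb1
      · rw [← hg₂app]; exact hb2
    have := hsub hz
    rw [Metric.mem_closedBall, dist_eq_norm] at this
    change ‖(WithLp.equiv 1 (X × Y)).symm ((0, b) - (x, y))‖ ≤ ε at this
    have hnorm : ‖(WithLp.equiv 1 (X × Y)).symm ((0, b) - (x, y))‖ = ‖x‖ + ‖b - y‖ := by
      rw [show ((0,b) - (x,y) : X × Y) = (-x, b - y) by ext <;> simp]
      rw [norm_withLp_one]; simp
    rw [hnorm] at this
    have hxε : ε < ‖x‖ := by
      rw [hε]; linarith [min_le_left ‖x‖ ‖y‖, norm_pos_iff.mpr hx]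
    have : ‖x‖ ≤ ε := le_trans (le_add_of_nonneg_right (norm_nonneg _)) this
    linarith
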